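/- Fix n ≥ 1 and nonnegative integers s(2),…,s(n). The set of s-inversion functions g additionally satisfying g(c,a) ≤ g(c,b) for all 1 ≤ a < b < c ≤ n (the s-Tamari trees) is a sublattice of the s-weak order: the least upper bound and the greatest lower bound, taken in the poset of all s-inversion functions ordered componentwise, of two such functions again satisfy g(c,a) ≤ g(c,b) for all a < b < c. -/

import Mathlib

/-- `g` is an `s`-inversion function. -/
def IsSInvFun (n : ℕ) (s : Fin n → ℕ) (g : Fin n → Fin n → ℕ) : Prop :=
  (∀ a c : Fin n, a < c → g c a ≤ s c) ∧
  (∀ a b c : Fin n, a < b → b < c → 0 < g b a → g c b ≤ g c a) ∧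
  (∀ a b c : Fin n, a < b → b < c → g b a < s b → g c a ≤ g c b)

/-- The componentwise order on `s`-inversion functions (the `s`-weak order). -/
def SLe (n : ℕ) (g h : Fin n → Fin n → ℕ) : Prop :=
  ∀ a c : Fin n, a < c → g c a ≤ h c a

/-- The `s`-Tamari condition: `g c a ≤ g c b` for all `a < b < c`. -/
def IsSTamari (n : ℕ) (g : Fin n → Fin n → ℕ) : Prop :=
  ∀ a b c : Fin n, a < b → b < c → g c a ≤ g c b

/-- One step of the closure relation used to build the join: `x → y` when
`x < y < c` and `k y x > 0`. -/
def RStep {n : ℕ} (k : Fin n → Fin n → ℕ) (c : Fin n) (x y : Fin n) : Prop :=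
  x < y ∧ y < c ∧ 0 < k y x

open Classical in
/-- Elements reachable from `a` by `RStep k c`-chains. -/
noncomputable def reachSet {n : ℕ} (k : Fin n → Fin n → ℕ) (c a : Fin n) :
    Finset (Fin n) :=
  Finset.univ.filter fun b => Relation.ReflTransGen (RStep k c) a b

lemma mem_reachSet {n : ℕ} {k : Fin n → Fin n → ℕ} {c a b : Fin n} :
    b ∈ reachSet k c a ↔ Relation.ReflTransGen (RStep k c) a b := by
  simp [reachSet]

/-- Candidate join of two `s`-Tamari trees (applied to `k = max g h`). -/
noncomputable def jfun {n : ℕ} (k : Fin n → Fin n → ℕ) (c a : Fin n) : ℕ :=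
  (reachSet k c a).sup (k c)

lemma reach_le {n : ℕ} {k : Fin n → Fin n → ℕ} {c a b : Fin n}
    (h : Relation.ReflTransGen (RStep k c) a b) : a ≤ b := by
  induction h with
  | refl => exact le_refl a
  | tail _ hstep ih => exact ih.trans hstep.1.le

lemma reach_lt {n : ℕ} {k : Fin n → Fin n → ℕ} {c a b : Fin n}
    (h : Relation.ReflTransGen (RStep k c) a b) : b = a ∨ b < c := by
  induction h with
  | refl => exact Or.inl rfl
  | tail _ hstep _ => exact Or.inr hstep.2.1

lemma reach_widen {n : ℕ} {k : Fin n → Fin n → ℕ} {c d a b : Fin n}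
    (hcd : c ≤ d) (h : Relation.ReflTransGen (RStep k c) a b) :
    Relation.ReflTransGen (RStep k d) a b :=
  Relation.ReflTransGen.mono
    (p := RStep k d) (fun _ _ hxy => ⟨hxy.1, lt_of_lt_of_le hxy.2.1 hcd, hxy.2.2⟩) a b h

lemma reach_restrict {n : ℕ} {k : Fin n → Fin n → ℕ} {c a b : Fin n}
    (h : Relation.ReflTransGen (RStep k c) a b) :
    ∀ d : Fin n, b < d → Relation.ReflTransGen (RStep k d) a b := by
  induction h with
  | refl => intro d _; exact Relation.ReflTransGen.refl
  | @tail x y h1 hstep ih =>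
      intro d hd
      exact Relation.ReflTransGen.tail (ih d (hstep.1.trans hd))
        ⟨hstep.1, hd, hstep.2.2⟩

lemma reach_split {n : ℕ} {k : Fin n → Fin n → ℕ}
    (ktam : ∀ x y z : Fin n, x < y → y < z → k z x ≤ k z y)
    {c a b' : Fin n} (h : Relation.ReflTransGen (RStep k c) a b') :
    ∀ b : Fin n, a ≤ b → b ≤ b' → Relation.ReflTransGen (RStep k c) b b' := by
  induction h with
  | refl =>
      intro b hab hba
      obtain rfl : a = b := le_antisymm hab hba
      exact Relation.ReflTransGen.refl
  | @tail x y h1 hstep ih =>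
      intro b hab hby
      rcases le_or_gt b x with hbx | hxb
      · exact Relation.ReflTransGen.tail (ih b hab hbx) hstep
      · rcases eq_or_lt_of_le hby with rfl | hblt
        · exact Relation.ReflTransGen.refl
        · exact Relation.ReflTransGen.single
            ⟨hblt, hstep.2.1, lt_of_lt_of_le hstep.2.2 (ktam x b y hxb hblt)⟩

lemma le_jfun {n : ℕ} {k : Fin n → Fin n → ℕ} {c a b : Fin n}
    (h : Relation.ReflTransGen (RStep k c) a b) : k c b ≤ jfun k c a :=
  Finset.le_sup (mem_reachSet.mpr h)

lemma jfun_le {n : ℕ} {k : Fin n → Fin n → ℕ} {c a : Fin n} {v : ℕ}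
    (H : ∀ b : Fin n, Relation.ReflTransGen (RStep k c) a b → k c b ≤ v) :
    jfun k c a ≤ v :=
  Finset.sup_le fun b hb => H b (mem_reachSet.mp hb)

lemma k_le_jfun {n : ℕ} {k : Fin n → Fin n → ℕ} {c a : Fin n} :
    k c a ≤ jfun k c a :=
  le_jfun Relation.ReflTransGen.refl

/-- `jfun k` satisfies the Tamari condition. -/
lemma jfun_tamari {n : ℕ} {k : Fin n → Fin n → ℕ}
    (ktam : ∀ x y z : Fin n, x < y → y < z → k z x ≤ k z y)
    {a b c : Fin n} (hab : a < b) (hbc : b < c) :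
    jfun k c a ≤ jfun k c b := by
  refine jfun_le fun b' hb' => ?_
  rcases le_or_gt b b' with hbb' | hb'b
  · exact le_jfun (reach_split ktam hb' b hab.le hbb')
  · exact (ktam b' b c hb'b hbc).trans k_le_jfun

/-- `jfun k` is bounded by `s`. -/
lemma jfun_bound {n : ℕ} {s : Fin n → ℕ} {k : Fin n → Fin n → ℕ}
    (kb : ∀ x y : Fin n, y < x → k x y ≤ s x)
    {a c : Fin n} (hac : a < c) : jfun k c a ≤ s c := by
  refine jfun_le fun b hb => ?_
  rcases reach_lt hb with rfl | hlt
  · exact kb c b hac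
  · exact kb c b hlt

/-- `jfun k` is transitive. -/
lemma jfun_trans {n : ℕ} {k : Fin n → Fin n → ℕ}
    {a b c : Fin n} (hab : a < b) (hbc : b < c) (hpos : 0 < jfun k b a) :
    jfun k c b ≤ jfun k c a := by
  obtain ⟨b0, hb0mem, hb0pos⟩ := Finset.lt_sup_iff.mp hpos
  have hchain : Relation.ReflTransGen (RStep k b) a b0 := mem_reachSet.mp hb0mem
  have hb0b : b0 < b := by
    rcases reach_lt hchain with rfl | hlt
    · exact hab
    · exact hlt
  have hreach_b : Relation.ReflTransGen (RStep k c) a b :=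
    Relation.ReflTransGen.tail (reach_widen hbc.le hchain) ⟨hb0b, hbc, hb0pos⟩
  exact jfun_le fun b2 hb2 => le_jfun (hreach_b.trans hb2)

/-- `jfun k` is planar. -/
lemma jfun_planar {n : ℕ} {s : Fin n → ℕ} {k : Fin n → Fin n → ℕ}
    (ktam : ∀ x y z : Fin n, x < y → y < z → k z x ≤ k z y)
    (kplan : ∀ x y z : Fin n, x < y → y < z → k y x < s y → k z x ≤ k z y)
    {a b c : Fin n} (hab : a < b) (hbc : b < c) (hlt : jfun k b a < s b) :
    jfun k c a ≤ jfun k c b := by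
  refine jfun_le fun b' hb' => ?_
  rcases le_or_gt b b' with hbb' | hb'b
  · exact le_jfun (reach_split ktam hb' b hab.le hbb')
  · have hchain : Relation.ReflTransGen (RStep k b) a b' :=
      reach_restrict hb' b hb'b
    have hkb : k b b' < s b := lt_of_le_of_lt (le_jfun hchain) hlt
    exact (kplan b' b c hb'b hbc hkb).trans k_le_jfun

/-- `jfun k` is below every `s`-inversion upper bound of `k`. -/
lemma jfun_least {n : ℕ} {s : Fin n → ℕ} {k u : Fin n → Fin n → ℕ}
    (hu : IsSInvFun n s u) (hku : ∀ x y : Fin n, y < x → k x y ≤ u x y)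
    {a c : Fin n} (hac : a < c) : jfun k c a ≤ u c a := by
  have key : ∀ b : Fin n, Relation.ReflTransGen (RStep k c) a b →
      u c b ≤ u c a := by
    intro b hb
    induction hb with
    | refl => exact le_refl _
    | @tail x y h1 hstep ih =>
        have hpos : 0 < u y x := lt_of_lt_of_le hstep.2.2 (hku y x hstep.1)
        exact (hu.2.1 x y c hstep.1 hstep.2.1 hpos).trans ih
  refine jfun_le fun b hb => ?_
  have hbc : b < c := by
    rcases reach_lt hb with rfl | hlt
    · exact hac
    · exact hlt
  exact (hku c b hbc).trans (key b hb)

/-- The `s`-Tamari trees (the `s`-inversion functions satisfying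
`g c a ≤ g c b` for all `a < b < c`) form a sublattice of the `s`-weak order:
any greatest lower bound and any least upper bound — taken in the poset of all
`s`-inversion functions ordered componentwise — of two such functions again
satisfies the `s`-Tamari condition. -/
theorem s_tamari_sublattice (n : ℕ) (hn : 1 ≤ n) (s : Fin n → ℕ)
    (g h : Fin n → Fin n → ℕ)
    (hg : IsSInvFun n s g) (hh : IsSInvFun n s h)
    (hgT : IsSTamari n g) (hhT : IsSTamari n h) :
    (∀ m : Fin n → Fin n → ℕ, IsSInvFun n s m → SLe n m g → SLe n m h →
      (∀ u : Fin n → Fin n → ℕ, IsSInvFun n s u → SLe n u g → SLe n u h →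
        SLe n u m) →
      IsSTamari n m) ∧
    (∀ jn : Fin n → Fin n → ℕ, IsSInvFun n s jn → SLe n g jn → SLe n h jn →
      (∀ u : Fin n → Fin n → ℕ, IsSInvFun n s u → SLe n g u → SLe n h u →
        SLe n jn u) →
      IsSTamari n jn) := by
  obtain ⟨hgb, hgt, hgp⟩ := hg
  obtain ⟨hhb, hht, hhp⟩ := hh
  constructor
  · -- meets: the meet is the pointwise min
    intro m hm hmg hmh hglb a b c hab hbc
    have hac : a < c := hab.trans hbc
    set M : Fin n → Fin n → ℕ := fun x y => min (g x y) (h x y) with hM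
    have hMinv : IsSInvFun n s M := by
      refine ⟨fun x y hxy => (min_le_left _ _).trans (hgb x y hxy), ?_, ?_⟩
      · intro x y z hxy hyz hpos
        have hgpos : 0 < g y x := lt_of_lt_of_le hpos (min_le_left _ _)
        have hhpos : 0 < h y x := lt_of_lt_of_le hpos (min_le_right _ _)
        exact le_min ((min_le_left _ _).trans (hgt x y z hxy hyz hgpos))
          ((min_le_right _ _).trans (hht x y z hxy hyz hhpos))
      · intro x y z hxy hyz _
        exact le_min ((min_le_left _ _).trans (hgT x y z hxy hyz))
          ((min_le_right _ _).trans (hhT x y z hxy hyz))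
    have hMm : SLe n M m :=
      hglb M hMinv (fun x y hxy => min_le_left _ _) (fun x y hxy => min_le_right _ _)
    calc m c a ≤ M c a := le_min (hmg a c hac) (hmh a c hac)
      _ ≤ M c b := le_min ((min_le_left _ _).trans (hgT a b c hab hbc))
          ((min_le_right _ _).trans (hhT a b c hab hbc))
      _ ≤ m c b := hMm b c hbc
  · -- joins
    intro jn hj hgj hhj hlub a b c hab hbc
    have hac : a < c := hab.trans hbc
    set k : Fin n → Fin n → ℕ := fun x y => max (g x y) (h x y) with hk
    have ktam : ∀ x y z : Fin n, x < y → y < z → k z x ≤ k z y :=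
      fun x y z h1 h2 => max_le_max (hgT x y z h1 h2) (hhT x y z h1 h2)
    have kplan : ∀ x y z : Fin n, x < y → y < z → k y x < s y → k z x ≤ k z y := by
      intro x y z h1 h2 hlt
      exact max_le_max (hgp x y z h1 h2 (lt_of_le_of_lt (le_max_left _ _) hlt))
        (hhp x y z h1 h2 (lt_of_le_of_lt (le_max_right _ _) hlt))
    have kb : ∀ x y : Fin n, y < x → k x y ≤ s x :=
      fun x y hxy => max_le (hgb y x hxy) (hhb y x hxy)
    have hJinv : IsSInvFun n s (jfun k) :=
      ⟨fun x y hxy => jfun_bound kb hxy,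
       fun x y z h1 h2 hp => jfun_trans h1 h2 hp,
       fun x y z h1 h2 hp => jfun_planar ktam kplan h1 h2 hp⟩
    have hgJ : SLe n g (jfun k) :=
      fun x y hxy => (le_max_left (g y x) (h y x)).trans (k_le_jfun (k := k))
    have hhJ : SLe n h (jfun k) :=
      fun x y hxy => (le_max_right (g y x) (h y x)).trans (k_le_jfun (k := k))
    have hku : ∀ x y : Fin n, y < x → k x y ≤ jn x y :=
      fun x y hxy => max_le (hgj y x hxy) (hhj y x hxy)
    have hjnJ : SLe n jn (jfun k) := hlub (jfun k) hJinv hgJ hhJ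
    calc jn c a ≤ jfun k c a := hjnJ a c hac
      _ ≤ jfun k c b := jfun_tamari ktam hab hbc
      _ ≤ jn c b := jfun_least hj hku hbc
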